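/- Let f : V₁ → V₂ be a linear map between finite-dimensional real vector spaces and L a vector Dirac structure on V₁. Then f*(f_*L) = L if and only if ker(f) ⊆ Ker(L), where Ker(L) = {X ∈ V₁ : (X,0) ∈ L}. -/

import Mathlib

/-- For a linear map `f : V₁ → V₂` and a vector Dirac structure `L` on `V₁`:
`f*(f₊L) = L` iff `ker f ⊆ Ker L = {X : (X,0) ∈ L}`. -/
theorem stmt_10 (V₁ V₂ : Type*) [AddCommGroup V₁] [Module ℝ V₁] [FiniteDimensional ℝ V₁]
    [AddCommGroup V₂] [Module ℝ V₂] [FiniteDimensional ℝ V₂] (f : V₁ →ₗ[ℝ] V₂)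
    (L : Submodule ℝ (V₁ × Module.Dual ℝ V₁))
    (hiso : ∀ z ∈ L, ∀ w ∈ L, z.2 w.1 + w.2 z.1 = 0)
    (hdim : Module.finrank ℝ L = Module.finrank ℝ V₁) :
    {p : V₁ × Module.Dual ℝ V₁ | ∃ β : Module.Dual ℝ V₂, p.2 = β ∘ₗ f ∧
        (f p.1, β) ∈ {q : V₂ × Module.Dual ℝ V₂ | ∃ X : V₁, q.1 = f X ∧ (X, q.2 ∘ₗ f) ∈ L}}
      = (L : Set (V₁ × Module.Dual ℝ V₁)) ↔
    ∀ X ∈ LinearMap.ker f, (X, (0 : Module.Dual ℝ V₁)) ∈ L := by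
  constructor
  · intro h X hX
    have : (X, (0 : Module.Dual ℝ V₁)) ∈
        {p : V₁ × Module.Dual ℝ V₁ | ∃ β : Module.Dual ℝ V₂, p.2 = β ∘ₗ f ∧
          (f p.1, β) ∈ {q : V₂ × Module.Dual ℝ V₂ | ∃ X : V₁, q.1 = f X ∧ (X, q.2 ∘ₗ f) ∈ L}} := by
      refine ⟨0, by simp, ⟨0, ?_, ?_⟩⟩
      · simpa using hX
      · simpa using (show ((0, 0) : V₁ × Module.Dual ℝ V₁) ∈ L from L.zero_mem)
    rw [h] at this
    exact this
  · intro hker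
    ext p
    constructor
    · rintro ⟨β, hβ, X, hfX, hXL⟩
      have h1 : (p.1 - X, (0 : Module.Dual ℝ V₁)) ∈ L := by
        apply hker
        simp [LinearMap.mem_ker, map_sub, hfX.symm]
      have h2 : (X, p.2) ∈ L := by rw [hβ]; exact hXL
      have := L.add_mem h1 h2
      simpa using this
    · intro hp
      -- p.2 vanishes on ker f
      have hann : p.2 ∈ (LinearMap.ker f).dualAnnihilator := by
        rw [Submodule.mem_dualAnnihilator]
        intro w hw
        have := hiso p hp (w, 0) (hker w hw)
        simpa using this
      rw [← LinearMap.range_dualMap_eq_dualAnnihilator_ker] at hann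
      obtain ⟨β, hβ⟩ := hann
      exact ⟨β, hβ.symm ▸ rfl, p.1, rfl, by
        have : (β : Module.Dual ℝ V₂) ∘ₗ f = p.2 := hβ
        rw [this]; exact hp⟩
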